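/- arXiv:2505.05404 — 3 statements merged into one kernel-verified Lean document; each statement's English description precedes it below -/
import Mathlib

section
/- Let h : (ℝ³)ⁿ → ℝ³ be O(3)-equivariant, i.e. h(Q r₁, …, Q rₙ) = Q h(r₁, …, rₙ) for every orthogonal matrix Q. Then for every input (r₁, …, rₙ), the value h(r₁, …, rₙ) lies in the linear span of {r₁, …, rₙ}. -/
open Matrix

theorem equivariant_vector_in_span {n : ℕ}
    (h : (Fin n → Fin 3 → ℝ) → (Fin 3 → ℝ))
    (hequiv : ∀ Q ∈ Matrix.orthogonalGroup (Fin 3) ℝ, ∀ r : Fin n → Fin 3 → ℝ,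
      h (fun i => Q.mulVec (r i)) = Q.mulVec (h r)) :
    ∀ r : Fin n → Fin 3 → ℝ, h r ∈ Submodule.span ℝ (Set.range r) := by
  intro r
  let r' : Fin n → EuclideanSpace ℝ (Fin 3) := fun i => (WithLp.equiv 2 _).symm (r i)
  let V : Submodule ℝ (EuclideanSpace ℝ (Fin 3)) := Submodule.span ℝ (Set.range r')
  let p : EuclideanSpace ℝ (Fin 3) →ₗ[ℝ] EuclideanSpace ℝ (Fin 3) :=
    (V.subtypeL ∘L V.orthogonalProjectionOnto : EuclideanSpace ℝ (Fin 3) →L[ℝ] _)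
  let P : Matrix (Fin 3) (Fin 3) ℝ := Matrix.toEuclideanLin.symm p
  have hPe : Matrix.toEuclideanLin P = p := Matrix.toEuclideanLin.apply_symm_apply p
  have hP : ∀ x : Fin 3 → ℝ, P *ᵥ x = WithLp.ofLp (p (WithLp.toLp 2 x)) := fun x =>
    congrArg WithLp.ofLp (LinearMap.congr_fun hPe (WithLp.toLp 2 x))
  have hPfix : ∀ x : EuclideanSpace ℝ (Fin 3), x ∈ V → p x = x := by
    intro x hx
    exact Submodule.starProjection_eq_self_iff.mpr hx
  have hPmem : ∀ x : EuclideanSpace ℝ (Fin 3), p x ∈ V := fun x =>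
    (V.orthogonalProjectionOnto x).2
  have hPP : P * P = P := by
    apply Matrix.toEuclideanLin.injective
    rw [hPe]
    refine LinearMap.ext fun x => ?_
    show WithLp.toLp 2 ((P * P) *ᵥ WithLp.ofLp x) = p x
    rw [← Matrix.mulVec_mulVec, hP, hP]
    simp only [WithLp.toLp_ofLp]
    exact hPfix _ (hPmem _)
  have hPsym : P.IsHermitian := by
    rw [Matrix.isHermitian_iff_isSymmetric, hPe]
    exact Submodule.starProjection_isSymmetric V
  set Q : Matrix (Fin 3) (Fin 3) ℝ := P + P - 1 with hQdef
  have hQmem : Q ∈ Matrix.orthogonalGroup (Fin 3) ℝ := by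
    rw [Matrix.mem_orthogonalGroup_iff]
    have hstar : star Q = Q := by
      have : star P = P := hPsym
      simp [hQdef, star_sub, star_add, this]
    rw [show Qᵀ = Q by rw [← Matrix.conjTranspose_eq_transpose_of_trivial]; exact hstar]
    have : Q * Q = (P * P) + (P * P) + (P * P) + (P * P) - P - P - P - P + 1 := by
      rw [hQdef]; noncomm_ring
    rw [this, hPP]
    noncomm_ring
  have key := hequiv Q hQmem r
  have hfix : (fun i => Q *ᵥ r i) = r := by
    funext i
    have hri : p (WithLp.toLp 2 (r i)) = WithLp.toLp 2 (r i) := hPfix _ (Submodule.subset_span ⟨i, rfl⟩)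
    rw [hQdef, Matrix.sub_mulVec, Matrix.add_mulVec, Matrix.one_mulVec, hP, hri, WithLp.ofLp_toLp]
    abel
  rw [hfix] at key
  have h2 : P *ᵥ h r = h r := by
    have hQv : Q *ᵥ h r = P *ᵥ h r + P *ᵥ h r - h r := by
      rw [hQdef, Matrix.sub_mulVec, Matrix.add_mulVec, Matrix.one_mulVec]
    have : h r = P *ᵥ h r + P *ᵥ h r - h r := key.trans hQv
    have h3 : (2 : ℝ) • (P *ᵥ h r) = (2 : ℝ) • h r := by
      rw [two_smul, two_smul]
      funext j
      have := congrFun this j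
      simp only [Pi.add_apply, Pi.sub_apply] at this ⊢
      linarith
    exact smul_right_injective (Fin 3 → ℝ) two_ne_zero h3
  have : WithLp.toLp 2 (h r) ∈ V := by
    rw [← h2, hP, WithLp.toLp_ofLp]
    exact hPmem _
  have := Submodule.apply_mem_span_image_of_mem_span
    (WithLp.linearEquiv 2 ℝ (Fin 3 → ℝ)).toLinearMap this
  rw [← Set.range_comp] at this
  exact this
end

section
/- Let h : (ℝ³)ⁿ → ℝ³ satisfy h(Q r₁, …, Q rₙ) = det(Q) · Q h(r₁, …, rₙ) for all Q ∈ O(3) (i.e. h is a pseudovector-valued equivariant function). Then for every input, h(r₁, …, rₙ) lies in the linear span of the cross products {rᵢ × rⱼ : 1 ≤ i, j ≤ n}. -/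
open Matrix

private lemma aux_vecMulVec_mul (a b c d : Fin 3 → ℝ) :
    vecMulVec a b * vecMulVec c d = (b ⬝ᵥ c) • vecMulVec a d := by
  ext i j
  simp only [Matrix.mul_apply, vecMulVec_apply, Matrix.smul_apply, dotProduct, smul_eq_mul,
    Finset.sum_mul]
  apply Finset.sum_congr rfl
  intros
  ring

private lemma aux_vecMulVec_mulVec (u x : Fin 3 → ℝ) :
    (vecMulVec u u).mulVec x = (u ⬝ᵥ x) • u := by
  ext i
  simp only [Matrix.mulVec, vecMulVec_apply, dotProduct, Pi.smul_apply, smul_eq_mul,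
    Finset.sum_mul]
  apply Finset.sum_congr rfl
  intros
  ring

/-- Key lemma: reflecting in the plane orthogonal to a unit vector `u` that is orthogonal
to all the `r i` shows that `h r` is a multiple of `u`. -/
private lemma aux_key {n : ℕ}
    (h : (Fin n → Fin 3 → ℝ) → (Fin 3 → ℝ))
    (hequiv : ∀ Q ∈ Matrix.orthogonalGroup (Fin 3) ℝ, ∀ r : Fin n → Fin 3 → ℝ,
      h (fun i => Q.mulVec (r i)) = Q.det • Q.mulVec (h r))
    (r : Fin n → Fin 3 → ℝ) (u : Fin 3 → ℝ) (hu : u ⬝ᵥ u = 1)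
    (hur : ∀ i, u ⬝ᵥ r i = 0) : h r = (u ⬝ᵥ h r) • u := by
  set M : Matrix (Fin 3) (Fin 3) ℝ := vecMulVec u u with hM
  set Q : Matrix (Fin 3) (Fin 3) ℝ := 1 - (2 : ℝ) • M with hQ
  have hMM : M * M = M := by
    rw [hM, aux_vecMulVec_mul, hu, one_smul]
  have hMT : M.transpose = M := by
    ext i j
    simp [hM, vecMulVec_apply, mul_comm]
  have hQT : star Q = Q := by
    show Qᵀ = Q
    rw [hQ, transpose_sub, transpose_one, transpose_smul, hMT]
  have hQQ : Q * Q = 1 := by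
    rw [hQ]
    simp only [sub_mul, mul_sub, one_mul, mul_one, Matrix.smul_mul, Matrix.mul_smul, hMM,
      smul_smul]
    module
  have hQO : Q ∈ Matrix.orthogonalGroup (Fin 3) ℝ := by
    rw [Matrix.mem_orthogonalGroup_iff]
    rw [show Qᵀ = Q from hQT, hQQ]
  have hdet : Q.det = -1 := by
    have hcol : Q = 1 + Matrix.replicateCol Unit ((-2 : ℝ) • u) * Matrix.replicateRow Unit u := by
      rw [hQ, hM, ← vecMulVec_eq, sub_eq_add_neg]
      congr 1
      ext i j
      simp [vecMulVec_apply]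
      ring
    rw [hcol, Matrix.det_one_add_replicateCol_mul_replicateRow, dotProduct_smul, hu]
    norm_num
  have hfix : (fun i => Q.mulVec (r i)) = r := by
    funext i
    rw [hQ, Matrix.sub_mulVec, Matrix.one_mulVec, Matrix.smul_mulVec, hM,
      aux_vecMulVec_mulVec, hur i]
    simp
  have heq := hequiv Q hQO r
  rw [hfix, hdet, hQ, Matrix.sub_mulVec, Matrix.one_mulVec, Matrix.smul_mulVec, hM,
    aux_vecMulVec_mulVec] at heq
  funext i
  have := congrFun heq i
  simp only [Pi.smul_apply, Pi.sub_apply, smul_eq_mul, neg_smul, one_smul, Pi.neg_apply] at this ⊢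
  linarith

private lemma aux_collinear {v w : Fin 3 → ℝ} (hv : v ≠ 0) (hc : crossProduct v w = 0) :
    ∃ c : ℝ, w = c • v := by
  have hvv : v ⬝ᵥ v ≠ 0 := fun hz => hv (dotProduct_self_eq_zero.mp hz)
  have e0 := congrFun hc 0
  have e1 := congrFun hc 1
  have e2 := congrFun hc 2
  simp [cross_apply] at e0 e1 e2
  refine ⟨(v ⬝ᵥ w) / (v ⬝ᵥ v), ?_⟩
  ext k
  rw [Pi.smul_apply, smul_eq_mul, div_mul_eq_mul_div, eq_div_iff hvv]
  simp only [dotProduct, Fin.sum_univ_three]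
  fin_cases k <;>
    simp only [Fin.zero_eta, Fin.mk_one, show (⟨2, by norm_num⟩ : Fin 3) = 2 from rfl]
  · linear_combination (- v 1) * e2 + v 2 * e1
  · linear_combination v 0 * e2 - v 2 * e0
  · linear_combination (- v 0) * e1 + v 1 * e0

private lemma aux_dot_self_pos {w : Fin 3 → ℝ} (hw : w ≠ 0) : 0 < w ⬝ᵥ w := by
  rcases lt_or_eq_of_le (Finset.sum_nonneg fun i _ => mul_self_nonneg (w i) :
      (0:ℝ) ≤ w ⬝ᵥ w) with h | h
  · exact h
  · exact absurd (dotProduct_self_eq_zero.mp h.symm) hw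

/-- Every nonzero vector in `ℝ³` admits a nonzero orthogonal vector. -/
private lemma aux_exists_perp (v : Fin 3 → ℝ) (hv : v ≠ 0) :
    ∃ w : Fin 3 → ℝ, w ≠ 0 ∧ w ⬝ᵥ v = 0 := by
  by_cases h01 : v 0 = 0 ∧ v 1 = 0
  · refine ⟨![1, 0, 0], ?_, ?_⟩
    · intro hz
      have := congrFun hz 0
      norm_num at this
    · simp [dotProduct, Fin.sum_univ_three, h01.1]
  · refine ⟨![-v 1, v 0, 0], ?_, ?_⟩
    · intro hz
      have h0 := congrFun hz 0
      have h1 := congrFun hz 1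
      simp at h0 h1
      exact h01 ⟨h1, by linarith⟩
    · simp [dotProduct, Fin.sum_univ_three]
      ring

theorem pseudovector_equivariant_in_span_of_crossProducts {n : ℕ}
    (h : (Fin n → Fin 3 → ℝ) → (Fin 3 → ℝ))
    (hequiv : ∀ Q ∈ Matrix.orthogonalGroup (Fin 3) ℝ, ∀ r : Fin n → Fin 3 → ℝ,
      h (fun i => Q.mulVec (r i)) = Q.det • Q.mulVec (h r)) :
    ∀ r : Fin n → Fin 3 → ℝ,
      h r ∈ Submodule.span ℝ {v : Fin 3 → ℝ | ∃ i j : Fin n, v = crossProduct (r i) (r j)} := by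
  intro r
  have inner_eq : ∀ a b : EuclideanSpace ℝ (Fin 3),
      (inner ℝ a b : ℝ) = (a : Fin 3 → ℝ) ⬝ᵥ (b : Fin 3 → ℝ) := by
    intro a b
    simp [PiLp.inner_apply, RCLike.inner_apply, dotProduct, mul_comm]
  -- the key step: `h r` is orthogonal to every vector orthogonal to all cross products
  have key : ∀ v : Fin 3 → ℝ, (∀ i j : Fin n, v ⬝ᵥ crossProduct (r i) (r j) = 0) →
      v ⬝ᵥ h r = 0 := by
    intro v hv
    by_cases hv0 : v = 0
    · simp [hv0]
    -- find a nonzero vector `w` orthogonal to `v` and to all the `r i`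
    have : ∃ w : Fin 3 → ℝ, w ≠ 0 ∧ w ⬝ᵥ v = 0 ∧ ∀ i, w ⬝ᵥ r i = 0 := by
      by_cases hex : ∃ i, crossProduct v (r i) ≠ 0
      · obtain ⟨i₀, hw⟩ := hex
        refine ⟨crossProduct v (r i₀), hw, ?_, ?_⟩
        · rw [dotProduct_comm]
          exact dot_self_cross v (r i₀)
        · intro j
          rw [dotProduct_comm, triple_product_permutation]
          exact hv i₀ j
      · push_neg at hex
        obtain ⟨w, hwne, hwv⟩ := aux_exists_perp v hv0
        refine ⟨w, hwne, hwv, ?_⟩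
        intro i
        obtain ⟨c, hcw⟩ := aux_collinear hv0 (hex i)
        rw [hcw, dotProduct_smul, hwv, smul_zero]
    obtain ⟨w, hwne, hwv, hwr⟩ := this
    have hpos : 0 < w ⬝ᵥ w := aux_dot_self_pos hwne
    set s : ℝ := Real.sqrt (w ⬝ᵥ w) with hs
    have hsq : s * s = w ⬝ᵥ w := Real.mul_self_sqrt hpos.le
    have hsne : s ≠ 0 := by
      rw [hs]
      positivity
    set u : Fin 3 → ℝ := s⁻¹ • w with hu
    have huu : u ⬝ᵥ u = 1 := by
      rw [hu, smul_dotProduct, dotProduct_smul, smul_eq_mul, smul_eq_mul, ← hsq,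
        show s⁻¹ * (s⁻¹ * (s * s)) = (s⁻¹ * s) * (s⁻¹ * s) by ring, inv_mul_cancel₀ hsne,
        mul_one]
    have hur : ∀ i, u ⬝ᵥ r i = 0 := by
      intro i
      rw [hu, smul_dotProduct, hwr i, smul_zero]
    have hmain := aux_key h hequiv r u huu hur
    rw [hmain, dotProduct_smul, hu, dotProduct_smul, dotProduct_comm v w,
      hwv]
    simp
  -- now conclude via the double orthogonal complement
  let S' : Set (EuclideanSpace ℝ (Fin 3)) :=
    {v : EuclideanSpace ℝ (Fin 3) | ∃ i j : Fin n, v = WithLp.toLp 2 (crossProduct (r i) (r j))}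
  let K : Submodule ℝ (EuclideanSpace ℝ (Fin 3)) := Submodule.span ℝ S'
  let x : EuclideanSpace ℝ (Fin 3) := WithLp.toLp 2 (h r)
  have hmemO : x ∈ Kᗮᗮ := by
    rw [Submodule.mem_orthogonal]
    intro v hvmem
    have hv : ∀ i j : Fin n, (v : Fin 3 → ℝ) ⬝ᵥ crossProduct (r i) (r j) = 0 := by
      intro i j
      let y : EuclideanSpace ℝ (Fin 3) := WithLp.toLp 2 (crossProduct (r i) (r j))
      have hmem : y ∈ K := Submodule.subset_span ⟨i, j, rfl⟩
      have h2 := (Submodule.mem_orthogonal K v).mp hvmem y hmem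
      rw [inner_eq] at h2
      rw [dotProduct_comm]
      exact h2
    rw [inner_eq]
    exact key v hv
  have hK : x ∈ K := by
    rw [Submodule.orthogonal_orthogonal K] at hmemO
    exact hmemO
  have hK' := Submodule.apply_mem_span_image_of_mem_span (WithLp.linearEquiv 2 ℝ (Fin 3 → ℝ)).toLinearMap hK
  convert hK' using 2
  case e'_5 => rfl
  case e'_4.e'_4 => rfl
  apply Set.ext
  intro v
  constructor
  · rintro ⟨i, j, rfl⟩
    exact ⟨_, ⟨i, j, rfl⟩, rfl⟩
  · rintro ⟨w, ⟨i, j, rfl⟩, rfl⟩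
    exact ⟨i, j, rfl⟩
end

section
/- Let h : (ℝ³)ⁿ → ℝ³ be O(3)-equivariant and invariant under every permutation of its n arguments. Then there exists a function f : ℝ³ × (multisets of size n−1 of ℝ³) → ℝ such that h(r₁,…,rₙ) = Σᵢ f(rᵢ, {rⱼ : j ≠ i}) rᵢ, where f is a scalar function invariant under permutations of its second (multiset) argument. -/
open Matrix Finset

lemma mem_span_of_equivariant {n : ℕ}
    (h : (Fin n → Fin 3 → ℝ) → (Fin 3 → ℝ))
    (hequiv : ∀ Q ∈ Matrix.orthogonalGroup (Fin 3) ℝ, ∀ r : Fin n → Fin 3 → ℝ,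
      h (fun i => Q.mulVec (r i)) = Q.mulVec (h r))
    (r : Fin n → Fin 3 → ℝ) :
    ∃ c : Fin n → ℝ, ∑ i, c i • r i = h r := by
  classical
  let e := WithLp.linearEquiv 2 ℝ (Fin 3 → ℝ)
  let r' : Fin n → EuclideanSpace ℝ (Fin 3) := fun i => e.symm (r i)
  set K : Submodule ℝ (EuclideanSpace ℝ (Fin 3)) := Submodule.span ℝ (Set.range r') with hK
  let Φ : EuclideanSpace ℝ (Fin 3) ≃ₗᵢ[ℝ] EuclideanSpace ℝ (Fin 3) := Submodule.reflection K
  let L : (Fin 3 → ℝ) ≃ₗ[ℝ] (Fin 3 → ℝ) := e.symm.trans (Φ.toLinearEquiv.trans e)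
  let Q : Matrix (Fin 3) (Fin 3) ℝ := LinearMap.toMatrix' (L : (Fin 3 → ℝ) →ₗ[ℝ] (Fin 3 → ℝ))
  have hQvec : ∀ x : Fin 3 → ℝ, Q.mulVec x = e (Φ (e.symm x)) := by
    intro x
    show Matrix.toLin' (LinearMap.toMatrix' _) x = _
    rw [Matrix.toLin'_toMatrix']
    rfl
  have hinner : ∀ x y : EuclideanSpace ℝ (Fin 3), inner (𝕜 := ℝ) x y = (e x) ⬝ᵥ (e y) := by
    intro x y
    simp [PiLp.inner_apply, dotProduct, RCLike.inner_apply, mul_comm]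
    rfl
  have hQmem : Q ∈ Matrix.orthogonalGroup (Fin 3) ℝ := by
    rw [Matrix.mem_orthogonalGroup_iff']
    ext i j
    have h1 : (Qᵀ * Q) i j = (fun k => Q k i) ⬝ᵥ (fun k => Q k j) := by
      simp [Matrix.mul_apply, dotProduct, Matrix.transpose_apply, mul_comm]
    have h2 : ∀ k l, Q.mulVec (Pi.single l 1) k = Q k l := by
      intro k l; simp [Matrix.mulVec_single]
    have h3 : (fun k => Q k i) ⬝ᵥ (fun k => Q k j)
        = inner (𝕜 := ℝ) (Φ (e.symm (Pi.single i 1))) (Φ (e.symm (Pi.single j 1))) := by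
      rw [hinner]
      congr 1
    rw [h1, h3, Φ.inner_map_map, hinner]
    simp [Matrix.one_apply, dotProduct, Pi.single_apply, eq_comm]
  have hfix : h r = e (Φ (e.symm (h r))) := by
    have := hequiv Q hQmem r
    have hr : (fun i => Q.mulVec (r i)) = r := by
      funext i
      rw [hQvec]
      have : Φ (e.symm (r i)) = e.symm (r i) :=
        Submodule.reflection_mem_subspace_eq_self (Submodule.subset_span ⟨i, rfl⟩)
      rw [this]; rfl
    rw [hr] at this
    calc h r = Q.mulVec (h r) := this
    _ = e (Φ (e.symm (h r))) := hQvec _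
  have hmem : e.symm (h r) ∈ K := by
    rw [← Submodule.reflection_eq_self_iff (K := K)]
    have := congrArg e.symm hfix
    simpa using this.symm
  rw [hK, Submodule.mem_span_range_iff_exists_fun] at hmem
  obtain ⟨c, hc⟩ := hmem
  refine ⟨c, ?_⟩
  have := congrArg e hc
  simpa [map_sum, _root_.map_smul, r'] using this

lemma exists_perm_of_map_eq {α : Type*} {n : ℕ} {r r' : Fin n → α}
    (hrr' : Multiset.map r Finset.univ.val = Multiset.map r' Finset.univ.val) :
    ∃ σ : Equiv.Perm (Fin n), r = r' ∘ σ := by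
  classical
  have hcard : ∀ a : α, Fintype.card {i // r i = a} = Fintype.card {i // r' i = a} := by
    intro a
    have hthis := congrArg (Multiset.count a) hrr'
    rw [Multiset.count_map, Multiset.count_map] at hthis
    have h2 : ∀ (f : Fin n → α), Multiset.filter (fun b => a = f b) Finset.univ.val
        = Multiset.filter (fun b => f b = a) Finset.univ.val :=
      fun f => Multiset.filter_congr (fun x _ => eq_comm)
    rw [h2, h2] at hthis
    simp only [Fintype.card_subtype, Finset.card_def, Finset.filter_val]
    exact hthis
  have e : ∀ a, {i // r i = a} ≃ {i // r' i = a} := fun a => Fintype.equivOfCardEq (hcard a)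
  refine ⟨Equiv.ofFiberEquiv e, ?_⟩
  funext i
  exact (Equiv.ofFiberEquiv_map e i).symm

lemma exists_symm_coeffs {n : ℕ} {M : Type*} [AddCommGroup M] [Module ℝ M]
    (v : Fin n → M) (x : M) (hc0 : ∃ c0 : Fin n → ℝ, ∑ i, c0 i • v i = x) :
    ∃ c : Fin n → ℝ, (∀ i j, v i = v j → c i = c j) ∧ ∑ i, c i • v i = x := by
  classical
  obtain ⟨c0, hc0⟩ := hc0
  set S : M → ℝ := fun w => ∑ j ∈ Finset.univ.filter (fun j => v j = w), c0 j with hS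
  set m : M → ℕ := fun w => (Finset.univ.filter (fun j => v j = w)).card with hm
  refine ⟨fun i => S (v i) / m (v i), fun i j hij => by dsimp only; rw [hij], ?_⟩
  have key : ∀ (F : M → M),
      ∑ i, F (v i) = ∑ w ∈ Finset.univ.image v, (m w : ℝ) • F w := by
    intro F
    rw [Finset.sum_comp]
    simp [hm, Nat.cast_smul_eq_nsmul]
  have h1 : ∑ i, (S (v i) / m (v i)) • v i
      = ∑ w ∈ Finset.univ.image v, (m w : ℝ) • ((S w / m w) • w) := key (fun w => (S w / (m w : ℝ)) • w)
  have h2 : ∑ i, c0 i • v i = ∑ w ∈ Finset.univ.image v, S w • w := by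
    rw [← Finset.sum_fiberwise_of_maps_to (fun i _ => Finset.mem_image_of_mem v (Finset.mem_univ i))]
    refine Finset.sum_congr rfl fun w _ => ?_
    rw [hS, Finset.sum_smul]
    exact Finset.sum_congr rfl fun j hj => by rw [(Finset.mem_filter.mp hj).2]
  rw [h1, ← hc0, h2]
  refine Finset.sum_congr rfl fun w hw => ?_
  have hmw : (m w : ℝ) ≠ 0 := by
    obtain ⟨i, _, rfl⟩ := Finset.mem_image.mp hw
    have hpos : 0 < m (v i) :=
      Finset.card_pos.mpr ⟨i, Finset.mem_filter.mpr ⟨Finset.mem_univ i, rfl⟩⟩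
    exact_mod_cast hpos.ne'
  rw [smul_smul, mul_div_assoc', mul_comm, mul_div_assoc, div_self hmw, mul_one]


theorem permutation_invariant_equivariant_vector_repr {n : ℕ}
    (h : (Fin n → Fin 3 → ℝ) → (Fin 3 → ℝ))
    (hequiv : ∀ Q ∈ Matrix.orthogonalGroup (Fin 3) ℝ, ∀ r : Fin n → Fin 3 → ℝ,
      h (fun i => Q.mulVec (r i)) = Q.mulVec (h r))
    (hperm : ∀ σ : Equiv.Perm (Fin n), ∀ r : Fin n → Fin 3 → ℝ, h (r ∘ σ) = h r) :
    ∃ f : (Fin 3 → ℝ) → Multiset (Fin 3 → ℝ) → ℝ,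
      ∀ r : Fin n → Fin 3 → ℝ,
        h r = ∑ i : Fin n, f (r i) (Multiset.map r (Finset.univ.erase i).val) • r i := by
  classical
  set P : Multiset (Fin 3 → ℝ) → Prop :=
    fun S => ∃ r : Fin n → Fin 3 → ℝ, Multiset.map r Finset.univ.val = S with hP
  have key : ∀ S : Multiset (Fin 3 → ℝ), ∃ (r : Fin n → Fin 3 → ℝ) (c : Fin n → ℝ),
      (P S → Multiset.map r Finset.univ.val = S) ∧
      (∀ i j, r i = r j → c i = c j) ∧ ∑ i, c i • r i = h r := by
    intro S
    by_cases hS : P S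
    · obtain ⟨r, hr⟩ := hS
      obtain ⟨c, hc1, hc2⟩ := exists_symm_coeffs r (h r) (mem_span_of_equivariant h hequiv r)
      exact ⟨r, c, fun _ => hr, hc1, hc2⟩
    · obtain ⟨c, hc1, hc2⟩ := exists_symm_coeffs (fun _ _ => (0:ℝ)) (h (fun _ _ => 0))
        (mem_span_of_equivariant h hequiv _)
      exact ⟨_, c, fun hPS => absurd hPS hS, hc1, hc2⟩
  choose rep cf hrep hsym hsum using key
  refine ⟨fun v M => if hj : ∃ j, rep (v ::ₘ M) j = v then cf (v ::ₘ M) hj.choose else 0, ?_⟩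
  intro r
  set S : Multiset (Fin 3 → ℝ) := Multiset.map r Finset.univ.val with hSdef
  have hPS : P S := ⟨r, rfl⟩
  have hrepS : Multiset.map (rep S) Finset.univ.val = Multiset.map r Finset.univ.val :=
    hrep S hPS
  obtain ⟨τ, hτ⟩ := exists_perm_of_map_eq hrepS.symm
  -- hτ : r = rep S ∘ τ
  have hcons : ∀ i : Fin n, (r i ::ₘ Multiset.map r (Finset.univ.erase i).val) = S := by
    intro i
    rw [hSdef]
    have : (Finset.univ : Finset (Fin n)).val = i ::ₘ (Finset.univ.erase i).val := by
      rw [Finset.erase_val]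
      exact (Multiset.cons_erase (Finset.mem_univ i)).symm
    rw [this, Multiset.map_cons]
  have hterm : ∀ i : Fin n,
      (if hj : ∃ j, rep (r i ::ₘ Multiset.map r (Finset.univ.erase i).val) j = r i then
        cf (r i ::ₘ Multiset.map r (Finset.univ.erase i).val) hj.choose else 0)
      = cf S (τ i) := by
    intro i
    rw [hcons i]
    have hex : ∃ j, rep S j = r i := ⟨τ i, by rw [hτ]; rfl⟩
    rw [dif_pos hex]
    refine hsym S hex.choose (τ i) ?_
    rw [hex.choose_spec, hτ]; rfl
  calc h r = h (rep S ∘ τ) := by rw [← hτ]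
    _ = h (rep S) := hperm τ (rep S)
    _ = ∑ j, cf S j • rep S j := (hsum S).symm
    _ = ∑ i, cf S (τ i) • rep S (τ i) := (Equiv.sum_comp τ (fun j => cf S j • rep S j)).symm
    _ = ∑ i : Fin n, (if hj : ∃ j, rep (r i ::ₘ Multiset.map r (Finset.univ.erase i).val) j = r i then
        cf (r i ::ₘ Multiset.map r (Finset.univ.erase i).val) hj.choose else 0) • r i := by
      refine Finset.sum_congr rfl fun i _ => ?_
      rw [hterm i, hτ]; rfl
end
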